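/- Let 0 < p < ∞ and 0 < r < 1, fixed. Suppose g, h : [−π, π] → ℝ are integrable and the Baernstein star-functions satisfy g*(θ) ≤ h*(θ) for all θ ∈ [0, π]. Then ∫_{−π}^{π} e^{p g(x)} dx ≤ ∫_{−π}^{π} e^{p h(x)} dx. -/

import Mathlib

open Real MeasureTheory

/-- The Baernstein star-function of `g`. -/
noncomputable def starFn (g : ℝ → ℝ) (θ : ℝ) : ℝ :=
  sSup {y : ℝ | ∃ E : Set ℝ, MeasurableSet E ∧ E ⊆ Set.Icc (-π) π ∧
    volume E = ENNReal.ofReal (2 * θ) ∧ y = ∫ x in E, g x}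

open Set Filter Topology

lemma baern_aux_int (p : ℝ) (hp : 0 < p) :
    IntegrableOn (fun u : ℝ => u * Real.exp (-(p*u))) (Set.Ioi 0) ∧
    (∫ u in Set.Ioi (0:ℝ), u * Real.exp (-(p*u))) = 1/p^2 := by
  have hderiv : ∀ u ∈ Set.Ici (0:ℝ), HasDerivAt (fun u : ℝ => -((u/p + 1/p^2) * Real.exp (-(p*u))))
      (u * Real.exp (-(p*u))) u := by
    intro u _
    have h1 : HasDerivAt (fun u : ℝ => u/p + 1/p^2) (1/p) u := by
      have := ((hasDerivAt_id u).div_const p).add_const (1/p^2)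
      simpa [one_div] using this
    have h2 : HasDerivAt (fun u : ℝ => Real.exp (-(p*u))) (-p * Real.exp (-(p*u))) u := by
      have := (Real.hasDerivAt_exp (-(p*u))).comp u (((hasDerivAt_id u).const_mul p).neg)
      simpa [mul_comm, Function.comp_def, Pi.neg_def] using this
    have := (h1.mul h2).neg
    refine this.congr_deriv ?_
    field_simp
    ring
  have htend : Tendsto (fun u : ℝ => -((u/p + 1/p^2) * Real.exp (-(p*u)))) atTop (𝓝 0) := by
    have h1 : Tendsto (fun u : ℝ => u * Real.exp (-(p*u))) atTop (𝓝 0) := by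
      have := tendsto_rpow_mul_exp_neg_mul_atTop_nhds_zero 1 p hp
      refine this.congr' ?_
      filter_upwards [eventually_gt_atTop (0:ℝ)] with x hx
      rw [Real.rpow_one, neg_mul]
    have h2 : Tendsto (fun u : ℝ => Real.exp (-(p*u))) atTop (𝓝 0) := by
      have hm : Tendsto (fun u : ℝ => p * u) atTop atTop :=
        Tendsto.const_mul_atTop hp tendsto_id
      exact Real.tendsto_exp_atBot.comp (tendsto_neg_atTop_atBot.comp hm)
    have h3 : Tendsto (fun u : ℝ => (1/p) * (u * Real.exp (-(p*u))) + (1/p^2) * Real.exp (-(p*u)))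
        atTop (𝓝 ((1/p) * 0 + (1/p^2) * 0)) := (h1.const_mul _).add (h2.const_mul _)
    simp only [mul_zero, add_zero] at h3
    have := h3.neg
    rw [neg_zero] at this
    exact this.congr (fun x => by ring)
  have hpos : ∀ u ∈ Set.Ioi (0:ℝ), 0 ≤ u * Real.exp (-(p*u)) := fun u hu =>
    mul_nonneg (le_of_lt hu) (Real.exp_pos _).le
  refine ⟨integrableOn_Ioi_deriv_of_nonneg' hderiv hpos htend, ?_⟩
  rw [integral_Ioi_of_hasDerivAt_of_nonneg' hderiv hpos htend]
  norm_num

lemma baern_kernel (p : ℝ) (hp : 0 < p) (a : ℝ) :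
    ∫⁻ s : ℝ, ENNReal.ofReal (p^2 * Real.exp (p*s) * max (a - s) 0)
      = ENNReal.ofReal (Real.exp (p*a)) := by
  have hFm : Measurable (fun s : ℝ => ENNReal.ofReal (p^2 * Real.exp (p*s) * max (a - s) 0)) :=
    ((measurable_const.mul (Real.measurable_exp.comp (measurable_const.mul measurable_id))).mul
      ((measurable_const.sub measurable_id).max measurable_const)).ennreal_ofReal
  have hswap := (Measure.measurePreserving_sub_left volume a).lintegral_comp hFm
  rw [← hswap]
  have heq : ∀ u : ℝ, ENNReal.ofReal (p^2 * Real.exp (p*(a - u)) * max (a - (a - u)) 0)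
      = ENNReal.ofReal ((p^2 * Real.exp (p*a)) * (max u 0 * Real.exp (-(p*u)))) := by
    intro u
    congr 1
    rw [show a - (a - u) = u by ring, show p * (a - u) = p*a + (-(p*u)) by ring, Real.exp_add]
    ring
  rw [lintegral_congr heq]
  rw [← lintegral_add_compl (fun u => ENNReal.ofReal ((p^2 * Real.exp (p*a)) *
      (max u 0 * Real.exp (-(p*u))))) (measurableSet_Ioi (a := (0:ℝ)))]
  have hIic : ∫⁻ u in (Set.Ioi (0:ℝ))ᶜ, ENNReal.ofReal ((p^2 * Real.exp (p*a)) *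
      (max u 0 * Real.exp (-(p*u)))) = 0 := by
    rw [compl_Ioi]
    rw [setLIntegral_congr_fun measurableSet_Iic (fun u (hu : u ≤ 0) => by
      rw [max_eq_right hu, zero_mul, mul_zero, ENNReal.ofReal_zero]), lintegral_zero]
  rw [hIic, add_zero]
  have hIoi : ∫⁻ u in Set.Ioi (0:ℝ), ENNReal.ofReal ((p^2 * Real.exp (p*a)) *
      (max u 0 * Real.exp (-(p*u))))
      = ∫⁻ u in Set.Ioi (0:ℝ), ENNReal.ofReal ((p^2 * Real.exp (p*a)) *
        (u * Real.exp (-(p*u)))) := by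
    refine setLIntegral_congr_fun measurableSet_Ioi (fun u (hu : 0 < u) => ?_)
    rw [max_eq_left hu.le]
  rw [hIoi]
  obtain ⟨hint, hval⟩ := baern_aux_int p hp
  have hone : IntegrableOn (fun u : ℝ => (p^2 * Real.exp (p*a)) * (u * Real.exp (-(p*u))))
      (Set.Ioi 0) := hint.const_mul _
  rw [← MeasureTheory.ofReal_integral_eq_lintegral_ofReal hone
    ((ae_restrict_iff' measurableSet_Ioi).2 (ae_of_all _ (fun u (hu : 0 < u) => ?_)))]
  · rw [MeasureTheory.integral_const_mul, hval]
    congr 1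
    field_simp
  · exact mul_nonneg (mul_nonneg (sq_nonneg p) (Real.exp_pos _).le)
      (mul_nonneg hu.le (Real.exp_pos _).le)

lemma baern_transform (p : ℝ) (hp : 0 < p) (f : ℝ → ℝ) (hf : IntegrableOn f (Set.Icc (-π) π)) :
    ∫⁻ x in Set.Icc (-π) π, ENNReal.ofReal (Real.exp (p * f x))
      = ∫⁻ s : ℝ, ENNReal.ofReal (p^2 * Real.exp (p*s)) *
          ENNReal.ofReal (∫ x in Set.Icc (-π) π, max (f x - s) 0) := by
  have h1 : ∀ x, ENNReal.ofReal (Real.exp (p * f x))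
      = ∫⁻ s : ℝ, ENNReal.ofReal (p^2 * Real.exp (p*s) * max (f x - s) 0) :=
    fun x => (baern_kernel p hp (f x)).symm
  rw [lintegral_congr h1]
  have hfx : AEMeasurable (fun q : ℝ × ℝ => f q.1)
      ((volume.restrict (Set.Icc (-π) π)).prod volume) :=
    hf.aemeasurable.comp_quasiMeasurePreserving Measure.quasiMeasurePreserving_fst
  have hmeas : AEMeasurable (Function.uncurry (fun x s : ℝ =>
      ENNReal.ofReal (p^2 * Real.exp (p*s) * max (f x - s) 0)))
      ((volume.restrict (Set.Icc (-π) π)).prod volume) := by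
    refine AEMeasurable.ennreal_ofReal ?_
    exact (aemeasurable_const.mul ((Real.measurable_exp.comp
      (measurable_const.mul measurable_snd)).aemeasurable)).mul
      ((hfx.sub measurable_snd.aemeasurable).max aemeasurable_const)
  rw [lintegral_lintegral_swap hmeas]
  refine lintegral_congr (fun s => ?_)
  have hc : (0:ℝ) ≤ p^2 * Real.exp (p*s) :=
    mul_nonneg (sq_nonneg p) (Real.exp_pos _).le
  have h2 : ∀ x, ENNReal.ofReal (p^2 * Real.exp (p*s) * max (f x - s) 0)
      = ENNReal.ofReal (p^2 * Real.exp (p*s)) * ENNReal.ofReal (max (f x - s) 0) :=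
    fun x => ENNReal.ofReal_mul hc
  rw [lintegral_congr h2, lintegral_const_mul' _ _ ENNReal.ofReal_ne_top]
  congr 1
  have hint : IntegrableOn (fun x => max (f x - s) 0) (Set.Icc (-π) π) := by
    refine Integrable.pos_part ?_
    exact hf.sub (integrableOn_const isCompact_Icc.measure_lt_top.ne)
  rw [← MeasureTheory.ofReal_integral_eq_lintegral_ofReal hint
    (ae_of_all _ (fun x => le_max_right _ _))]

lemma baern_key (g h : ℝ → ℝ)
    (hg : IntegrableOn g (Set.Icc (-π) π)) (hh : IntegrableOn h (Set.Icc (-π) π))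
    (hstar : ∀ θ ∈ Set.Icc (0 : ℝ) π, starFn g θ ≤ starFn h θ) (s : ℝ) :
    ∫ x in Set.Icc (-π) π, max (g x - s) 0 ≤ ∫ x in Set.Icc (-π) π, max (h x - s) 0 := by
  set I := Set.Icc (-π) π with hI
  have hIvol : volume I = ENNReal.ofReal (2*π) := by
    rw [hI, Real.volume_Icc]; congr 1; ring
  have hIfin : volume I < ⊤ := isCompact_Icc.measure_lt_top
  -- measurable representatives
  set g' := hg.1.mk g with hg'def
  have hgg' : g =ᵐ[volume.restrict I] g' := hg.1.ae_eq_mk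
  have hg'm : StronglyMeasurable g' := hg.1.stronglyMeasurable_mk
  have hg'i : IntegrableOn g' I := hg.congr hgg'
  set h' := hh.1.mk h with hh'def
  have hhh' : h =ᵐ[volume.restrict I] h' := hh.1.ae_eq_mk
  have hh'i : IntegrableOn h' I := hh.congr hhh'
  -- the set E and θ
  set t : Set ℝ := {x | s < g' x} with htdef
  have ht : MeasurableSet t := measurableSet_lt measurable_const hg'm.measurable
  set E : Set ℝ := I ∩ t with hEdef
  have hEm : MeasurableSet E := measurableSet_Icc.inter ht
  have hEI : E ⊆ I := Set.inter_subset_left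
  set m : ENNReal := volume E with hmdef
  have hmlt : m < ⊤ := lt_of_le_of_lt (measure_mono hEI) hIfin
  set θ : ℝ := m.toReal / 2 with hθdef
  have h2θ : m.toReal = 2*θ := by rw [hθdef]; ring
  have hvolE : volume E = ENNReal.ofReal (2*θ) := by
    rw [← h2θ, ENNReal.ofReal_toReal hmlt.ne]
  have hθ0 : 0 ≤ θ := div_nonneg ENNReal.toReal_nonneg (by norm_num)
  have hθπ : θ ≤ π := by
    have h1 : m ≤ ENNReal.ofReal (2*π) := hIvol ▸ measure_mono hEI
    have h2 : m.toReal ≤ 2*π := by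
      have := ENNReal.toReal_mono ENNReal.ofReal_ne_top h1
      rwa [ENNReal.toReal_ofReal (by positivity)] at this
    rw [hθdef]; linarith
  -- integrability facts
  have hconstI : IntegrableOn (fun _ : ℝ => s) I :=
    integrableOn_const hIfin.ne
  have hmaxg' : IntegrableOn (fun x => max (g' x - s) 0) I :=
    (hg'i.sub hconstI).pos_part
  have hmaxh' : IntegrableOn (fun x => max (h' x - s) 0) I :=
    (hh'i.sub hconstI).pos_part
  -- LHS = ∫_E g' - 2θ s
  have hLHS : ∫ x in I, max (g x - s) 0 = (∫ x in E, g x) - 2*θ*s := by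
    have e1 : ∫ x in I, max (g x - s) 0 = ∫ x in I, max (g' x - s) 0 :=
      integral_congr_ae (hgg'.mono fun x hx => by show max (g x - s) 0 = max (g' x - s) 0; rw [hx])
    have e2 : (∫ x in I ∩ t, max (g' x - s) 0) + ∫ x in I \ t, max (g' x - s) 0
        = ∫ x in I, max (g' x - s) 0 := integral_inter_add_diff ht hmaxg'
    have e3 : ∫ x in I \ t, max (g' x - s) 0 = 0 := by
      rw [setIntegral_congr_fun (measurableSet_Icc.diff ht)
        (fun x hx => max_eq_right (by
          have : ¬ s < g' x := hx.2
          linarith [not_lt.1 this]))]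
      exact integral_zero _ _
    have e4 : ∫ x in E, max (g' x - s) 0 = ∫ x in E, (g' x - s) :=
      setIntegral_congr_fun hEm (fun x hx => max_eq_left (by
        have : s < g' x := hx.2
        linarith))
    have e5 : ∫ x in E, (g' x - s) = (∫ x in E, g' x) - m.toReal * s := by
      rw [integral_sub (hg'i.mono_set hEI)
        (integrableOn_const hmlt.ne), setIntegral_const, smul_eq_mul, measureReal_def]
    have e6 : ∫ x in E, g x = ∫ x in E, g' x :=
      integral_congr_ae (ae_restrict_of_ae_restrict_of_subset hEI hgg')
    rw [e1, ← e2, e3, add_zero]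
    rw [show I ∩ t = E from rfl, e4, e5, e6, h2θ]
  -- ∫_E g ≤ starFn g θ
  have hbdd : BddAbove {y : ℝ | ∃ F : Set ℝ, MeasurableSet F ∧ F ⊆ Set.Icc (-π) π ∧
      volume F = ENNReal.ofReal (2 * θ) ∧ y = ∫ x in F, g x} := by
    refine ⟨∫ x in I, |g x|, ?_⟩
    rintro y ⟨F, hFm, hFI, hFvol, rfl⟩
    calc ∫ x in F, g x ≤ ∫ x in F, |g x| :=
          integral_mono (hg.mono_set hFI) ((hg.mono_set hFI).abs) (fun x => le_abs_self _)
      _ ≤ ∫ x in I, |g x| :=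
          setIntegral_mono_set hg.abs (ae_of_all _ fun x => abs_nonneg _)
            (HasSubset.Subset.eventuallyLE hFI)
  have hmem : (∫ x in E, g x) ≤ starFn g θ :=
    le_csSup hbdd ⟨E, hEm, hEI, hvolE, rfl⟩
  -- starFn h θ ≤ ∫_I max (h-s) 0 + 2θ s
  have hupper : starFn h θ ≤ (∫ x in I, max (h x - s) 0) + 2*θ*s := by
    refine csSup_le ⟨∫ x in Set.Icc (-π) (-π + 2*θ), h x, Set.Icc (-π) (-π + 2*θ),
      measurableSet_Icc, Set.Icc_subset_Icc le_rfl (by linarith [Real.pi_pos]), ?_, rfl⟩ ?_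
    · rw [Real.volume_Icc]; congr 1; ring
    · rintro y ⟨F, hFm, hFI, hFvol, rfl⟩
      have hFfin : volume F < ⊤ := lt_of_le_of_lt (measure_mono hFI) hIfin
      have hFtoReal : (volume F).toReal = 2*θ := by
        rw [hFvol, ENNReal.toReal_ofReal (by linarith)]
      have f1 : ∫ x in F, h x = ∫ x in F, h' x :=
        integral_congr_ae (ae_restrict_of_ae_restrict_of_subset hFI hhh')
      have f2 : ∫ x in F, (h' x - s) = (∫ x in F, h' x) - 2*θ*s := by
        rw [integral_sub (hh'i.mono_set hFI)
          (integrableOn_const hFfin.ne), setIntegral_const, smul_eq_mul, measureReal_def, hFtoReal]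
      have f3 : ∫ x in F, (h' x - s) ≤ ∫ x in F, max (h' x - s) 0 :=
        integral_mono ((hh'i.mono_set hFI).sub (integrableOn_const hFfin.ne))
          ((hh'i.mono_set hFI).sub (integrableOn_const hFfin.ne)).pos_part
          (fun x => le_max_left _ _)
      have f4 : ∫ x in F, max (h' x - s) 0 ≤ ∫ x in I, max (h' x - s) 0 :=
        setIntegral_mono_set hmaxh' (ae_of_all _ fun x => le_max_right _ _)
          (HasSubset.Subset.eventuallyLE hFI)
      have f5 : ∫ x in I, max (h' x - s) 0 = ∫ x in I, max (h x - s) 0 :=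
        (integral_congr_ae (hhh'.mono fun x hx => by show max (h x - s) 0 = max (h' x - s) 0; rw [hx])).symm
      have := f2 ▸ (f3.trans (f4.trans_eq f5))
      linarith [f1 ▸ this]
  have hgh := hstar θ ⟨hθ0, hθπ⟩
  rw [hLHS]
  linarith

theorem baernstein_star_implies_exp_means (p : ℝ) (hp : 0 < p) (g h : ℝ → ℝ)
    (hg : IntegrableOn g (Set.Icc (-π) π)) (hh : IntegrableOn h (Set.Icc (-π) π))
    (hstar : ∀ θ ∈ Set.Icc (0 : ℝ) π, starFn g θ ≤ starFn h θ) :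
    ∫⁻ x in Set.Icc (-π) π, ENNReal.ofReal (Real.exp (p * g x))
      ≤ ∫⁻ x in Set.Icc (-π) π, ENNReal.ofReal (Real.exp (p * h x)) := by
  rw [baern_transform p hp g hg, baern_transform p hp h hh]
  exact lintegral_mono fun s => mul_le_mul_right
    (ENNReal.ofReal_le_ofReal (baern_key g h hg hh hstar s)) _
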